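/- Let φ be a right-continuous comparison function and f : X → X a φ-contraction on a semi-metric space. If H ⊆ X satisfies 0 < χ(H) < ∞, then χ(f(H)) < χ(H). -/

import Mathlib

open Filter Topology Set

noncomputable section

/-- A semi-metric: symmetric, vanishing exactly on the diagonal (no triangle inequality). -/
def IsSemiMetric {X : Type*} (d : X → X → NNReal) : Prop :=
  (∀ x y, d x y = d y x) ∧ ∀ x y, d x y = 0 ↔ x = y

/-- Ball of radius `r` around `x`. -/
def SMBall {X : Type*} (d : X → X → NNReal) (x : X) (r : NNReal) : Set X := {y | d x y < r}

/-- The basic triangle function `Φ_d(u,v) = sup{d(x,y) : ∃ z, d(x,z) ≤ u, d(y,z) ≤ v}`. -/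
def SMPhi {X : Type*} (d : X → X → NNReal) (u v : NNReal) : ENNReal :=
  ⨆ (p : X × X) (_ : ∃ z : X, d p.1 z ≤ u ∧ d p.2 z ≤ v), (d p.1 p.2 : ENNReal)

/-- Normal property: the basic triangle function is finite-valued. -/
def SMNormal {X : Type*} (d : X → X → NNReal) : Prop := ∀ u v : NNReal, SMPhi d u v < ⊤

/-- Regular property: the basic triangle function is continuous at `(0,0)`. -/
def SMRegular {X : Type*} (d : X → X → NNReal) : Prop :=
  ∀ ε : NNReal, 0 < ε → ∃ δ : NNReal, 0 < δ ∧
    ∀ u v : NNReal, u ≤ δ → v ≤ δ → SMPhi d u v < (ε : ENNReal)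

/-- Cauchy sequence with respect to a semi- or pre-metric. -/
def SMCauchy {X : Type*} (d : X → X → NNReal) (x : ℕ → X) : Prop :=
  ∀ ε : NNReal, 0 < ε → ∃ N : ℕ, ∀ m ≥ N, ∀ n ≥ N, d (x m) (x n) < ε

/-- Completeness: every Cauchy sequence converges. -/
def SMComplete {X : Type*} (d : X → X → NNReal) : Prop :=
  ∀ x : ℕ → X, SMCauchy d x → ∃ l : X, Tendsto (fun n => d (x n) l) atTop (𝓝 0)

/-- Boundedness: contained in some ball. -/
def SMBounded {X : Type*} (d : X → X → NNReal) (H : Set X) : Prop :=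
  ∃ (x₀ : X) (r : NNReal), H ⊆ SMBall d x₀ r

/-- Comparison function: increasing, with iterates tending to zero on `(0,∞)`. -/
def SMComparison (φ : NNReal → NNReal) : Prop :=
  Monotone φ ∧ ∀ t : NNReal, 0 < t → Tendsto (fun n => φ^[n] t) atTop (𝓝 0)

/-- Right-continuity of a function `[0,∞) → [0,∞)`. -/
def SMRightCont (φ : NNReal → NNReal) : Prop :=
  ∀ t : NNReal, ContinuousWithinAt φ (Ici t) t

/-- Diameter of a set. -/
def SMdiam {X : Type*} (d : X → X → NNReal) (H : Set X) : ENNReal :=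
  ⨆ (x ∈ H) (y ∈ H), (d x y : ENNReal)

/-- `r`-neighborhood of a set. -/
def SMnbhd {X : Type*} (d : X → X → NNReal) (A : Set X) (r : NNReal) : Set X :=
  ⋃ x ∈ A, SMBall d x r

/-- Kuratowski measure of non-compactness. -/
def SMchi {X : Type*} (d : X → X → NNReal) (H : Set X) : ENNReal :=
  sInf {c : ENNReal | ∃ r : NNReal, c = (r : ENNReal) ∧ 0 < r ∧
    ∃ s : Finset X, H ⊆ ⋃ x ∈ s, SMBall d x r}

/-- Hausdorff-Pompeiu distance between subsets. -/
def SMdHP {X : Type*} (d : X → X → NNReal) (A B : Set X) : ENNReal :=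
  sInf {c : ENNReal | ∃ r : NNReal, c = (r : ENNReal) ∧ 0 < r ∧
    A ⊆ SMnbhd d B r ∧ B ⊆ SMnbhd d A r}

/-- Open sets of the semi-metric topology. -/
def SMOpen {X : Type*} (d : X → X → NNReal) (U : Set X) : Prop :=
  ∀ x ∈ U, ∃ r : NNReal, 0 < r ∧ SMBall d x r ⊆ U

/-- Closed sets of the semi-metric topology. -/
def SMClosed {X : Type*} (d : X → X → NNReal) (A : Set X) : Prop := SMOpen d Aᶜ

/-- Max semi-metric on `X^q`. -/
def SMmax {X : Type*} (q : ℕ) (d : X → X → NNReal) (x y : Fin q → X) : NNReal :=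
  Finset.univ.sup fun i => d (x i) (y i)

theorem stmt9 {X : Type*} (d : X → X → NNReal) (hd : IsSemiMetric d)
    (φ : NNReal → NNReal) (hφ : SMComparison φ) (hφr : SMRightCont φ)
    (f : X → X) (hf : ∀ x y, d (f x) (f y) ≤ φ (d x y))
    (H : Set X) (h0 : 0 < SMchi d H) (h1 : SMchi d H < ⊤) :
    SMchi d (f '' H) < SMchi d H := by
  classical
  set c := (SMchi d H).toNNReal with hc
  have hcoe : (c : ENNReal) = SMchi d H := ENNReal.coe_toNNReal h1.ne
  have hcpos : 0 < c := by
    have := h0; rw [← hcoe] at this; exact_mod_cast this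
  have hlt : ∀ t : NNReal, 0 < t → φ t < t := by
    intro t ht
    by_contra h
    push_neg at h
    have hiter : ∀ n, t ≤ φ^[n] t := by
      intro n
      induction n with
      | zero => simp
      | succ n ih =>
        rw [Function.iterate_succ_apply']
        exact le_trans h (hφ.1 ih)
    obtain ⟨n, hn⟩ := ((hφ.2 t ht).eventually (gt_mem_nhds ht)).exists
    exact absurd (hiter n) (not_le.mpr hn)
  have hφc : φ c < c := hlt c hcpos
  have hev : ∀ᶠ t in 𝓝[≥] c, φ t < c := (hφr c).eventually (gt_mem_nhds hφc)
  obtain ⟨b, hb, hball⟩ :=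
    (nhdsGE_basis_of_exists_gt ⟨c + 1, lt_add_of_pos_right c one_pos⟩).eventually_iff.mp hev
  have hsinf : SMchi d H < (b : ENNReal) := by
    rw [← hcoe]; exact_mod_cast hb
  rw [show SMchi d H = sInf _ from rfl, sInf_lt_iff] at hsinf
  obtain ⟨a, haS, hab⟩ := hsinf
  obtain ⟨r, rfl, hrpos, s, hcov⟩ := haS
  have hcr : c ≤ r := by
    have : SMchi d H ≤ (r : ENNReal) := sInf_le ⟨r, rfl, hrpos, s, hcov⟩
    rw [← hcoe] at this; exact_mod_cast this
  have hrb : r < b := by exact_mod_cast hab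
  have hφr' : φ r < c := hball ⟨hcr, hrb⟩
  obtain ⟨r', hr1, hr2⟩ := exists_between hφr'
  have hr'pos : 0 < r' := lt_of_le_of_lt (zero_le (a := φ r)) hr1
  have hmem : (r' : ENNReal) ∈ {c : ENNReal | ∃ ρ : NNReal, c = (ρ : ENNReal) ∧ 0 < ρ ∧
      ∃ s : Finset X, f '' H ⊆ ⋃ x ∈ s, SMBall d x ρ} := by
    refine ⟨r', rfl, hr'pos, s.image f, ?_⟩
    rintro y ⟨z, hz, rfl⟩
    have hz' := hcov hz
    simp only [Set.mem_iUnion] at hz' ⊢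
    obtain ⟨x, hx, hxz⟩ := hz'
    refine ⟨f x, Finset.mem_image_of_mem f hx, ?_⟩
    have hdz : d x z < r := hxz
    calc d (f x) (f z) ≤ φ (d x z) := hf x z
      _ ≤ φ r := hφ.1 hdz.le
      _ < r' := hr1
  have hle : SMchi d (f '' H) ≤ (r' : ENNReal) := sInf_le hmem
  refine lt_of_le_of_lt hle ?_
  rw [← hcoe]; exact_mod_cast hr2
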